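/- There exist reals r_1, …, r_6 ∈ [0,1] such that for every r* ∈ [0,1], min_{1 ≤ i ≤ 6} B(r_i, r*) ≤ 1.5714. -/

import Mathlib

/-- The PH3 bound function `B(r_L, r*)`:
`B(r_L, r*) = 3/2 + min{1/(4r*), 3/(6r*+2)}·(r* − r_L)` if `r* ≥ r_L`, and
`B(r_L, r*) = 3/2 + min{3/(4r*), 9/(6r*+2)}·(r_L − r*)` if `r* < r_L`, where the minima are
written out piecewise: the first equals `3/(6r*+2)` for `r* ≤ 1/3` and `1/(4r*)` for
`r* ≥ 1/3`, the second equals `9/(6r*+2)` for `r* ≤ 1/3` and `3/(4r*)` for `r* ≥ 1/3`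
(in particular, for `r* = 0` both minima are taken as the second expression). -/
noncomputable def Bfun (rL rs : ℝ) : ℝ :=
  if rL ≤ rs then
    3/2 + (if rs ≤ 1/3 then 3/(6*rs + 2) else 1/(4*rs)) * (rs - rL)
  else
    3/2 + (if rs ≤ 1/3 then 9/(6*rs + 2) else 3/(4*rs)) * (rL - rs)

private lemma auxB {a b : ℝ} (hb : 0 < b) (h : a ≤ (714/10000) * b) :
    3/2 + a/b ≤ 1.5714 := by
  have h2 : a / b ≤ 714/10000 := by
    rw [div_le_iff₀ hb]; linarith
  norm_num at h2 ⊢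
  linarith

/-- There exist parameters r_1, …, r_6 ∈ [0,1] such that for every r* ∈ [0,1] the best of
the corresponding 6 parallel copies of PH3 has bound at most 1.5714. -/
theorem kcopy_PH3_bound :
    ∃ r : Fin 6 → ℝ, (∀ i, r i ∈ Set.Icc (0 : ℝ) 1) ∧
      ∀ rs ∈ Set.Icc (0 : ℝ) 1, ∃ i, Bfun (r i) rs ≤ 1.5714 := by
  refine ⟨![793/50000, 4671/50000, 941/5000, 7601/25000, 46609/100000, 71453/100000],
    ?_, ?_⟩
  · intro i
    fin_cases i <;> constructor <;> norm_num
  · rintro rs ⟨h0, h1⟩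
    rcases le_or_gt rs (7403/100000) with hc | hc
    · refine ⟨0, ?_⟩
      show Bfun (793/50000) rs ≤ 1.5714
      simp only [Bfun]
      split_ifs <;>
        first
          | (rw [div_mul_eq_mul_div]; exact auxB (by linarith) (by linarith))
          | linarith
    · rcases le_or_gt rs (16451/100000) with hc2 | hc2
      · refine ⟨1, ?_⟩
        show Bfun (4671/50000) rs ≤ 1.5714
        simp only [Bfun]
        split_ifs <;>
          first
            | (rw [div_mul_eq_mul_div]; exact auxB (by linarith) (by linarith))
            | linarith
      · rcases le_or_gt rs (6877/25000) with hc3 | hc3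
        · refine ⟨2, ?_⟩
          show Bfun (941/5000) rs ≤ 1.5714
          simp only [Bfun]
          split_ifs <;>
            first
              | (rw [div_mul_eq_mul_div]; exact auxB (by linarith) (by linarith))
              | linarith
        · rcases le_or_gt rs (21279/50000) with hc4 | hc4
          · refine ⟨3, ?_⟩
            show Bfun (7601/25000) rs ≤ 1.5714
            simp only [Bfun]
            split_ifs <;>
              first
                | (rw [div_mul_eq_mul_div]; exact auxB (by linarith) (by linarith))
                | linarith
          · rcases le_or_gt rs (32621/50000) with hc5 | hc5
            · refine ⟨4, ?_⟩
              show Bfun (46609/100000) rs ≤ 1.5714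
              simp only [Bfun]
              split_ifs <;>
                first
                  | (rw [div_mul_eq_mul_div]; exact auxB (by linarith) (by linarith))
                  | linarith
            · refine ⟨5, ?_⟩
              show Bfun (71453/100000) rs ≤ 1.5714
              simp only [Bfun]
              split_ifs <;>
                first
                  | (rw [div_mul_eq_mul_div]; exact auxB (by linarith) (by linarith))
                  | linarith
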